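/- Mean-square smallness of S^{-1} − I: for every T > 0 there exists a constant K ≥ 0 such that for all t ∈ [0, T] and all v ∈ ℝ^d, ∫_{ℝ^m} ‖(S(−t; −w) − I_d)·v‖² dγ_t^{⊗m}(w) ≤ K·t·‖v‖², where γ_t^{⊗m} is the m-fold product of the Gaussian measure N(0, t) on ℝ. (Under the commutator conditions S(−t; −w) = S(t; w)^{-1}; this is the estimate E‖(S_{s,t_k}^{-1} − I)v‖² ≤ K|s − t_k|·‖v‖² used for the terms II and IV in the proofs of Lemmas 1 and 2.) -/

import Mathlib

open scoped Matrix
open MeasureTheory ProbabilityTheory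
open scoped Nat
set_option maxHeartbeats 2000000

/-- `S τ w = exp((A − (1/2)·∑ᵢ Bᵢ²)·τ + ∑ᵢ wᵢ·Bᵢ)`. -/
noncomputable def S {d m : ℕ} (A : Matrix (Fin d) (Fin d) ℝ)
    (B : Fin m → Matrix (Fin d) (Fin d) ℝ) (τ : ℝ) (w : Fin m → ℝ) :
    Matrix (Fin d) (Fin d) ℝ :=
  NormedSpace.exp (τ • (A - (1 / 2 : ℝ) • ∑ i, B i ^ 2) + ∑ i, w i • B i)

namespace SAux

lemma sq_le_four_mul_exp {y : ℝ} (hy : 0 ≤ y) : y ^ 2 ≤ 4 * Real.exp y := by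
  have h := Real.add_one_le_exp (y / 2)
  have h2 : Real.exp (y / 2) * Real.exp (y / 2) = Real.exp y := by
    rw [← Real.exp_add]; ring_nf
  nlinarith [Real.exp_pos (y / 2)]

lemma norm_exp_sub_one_le {𝔸 : Type*} [NormedRing 𝔸] [NormedAlgebra ℝ 𝔸] [CompleteSpace 𝔸]
    (x : 𝔸) : ‖NormedSpace.exp x - 1‖ ≤ ‖x‖ * Real.exp ‖x‖ := by
  have hs : Summable fun n : ℕ => ((n ! : ℝ))⁻¹ • x ^ n := NormedSpace.expSeries_summable' x
  have h0 : NormedSpace.exp x = 1 + ∑' n : ℕ, (((n + 1)! : ℝ))⁻¹ • x ^ (n + 1) := by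
    rw [NormedSpace.exp_eq_tsum ℝ]
    show (∑' n : ℕ, ((n ! : ℝ))⁻¹ • x ^ n) = _
    rw [Summable.tsum_eq_zero_add hs]
    norm_num
  have hsn : Summable fun n : ℕ => ‖(((n + 1)! : ℝ))⁻¹ • x ^ (n + 1)‖ :=
    (summable_nat_add_iff (f := fun n : ℕ => ‖((n ! : ℝ))⁻¹ • x ^ n‖) 1).2
      (NormedSpace.norm_expSeries_summable' x)
  have hterm : ∀ n : ℕ, ‖(((n + 1)! : ℝ))⁻¹ • x ^ (n + 1)‖ ≤ ‖x‖ * (‖x‖ ^ n / (n ! : ℝ)) := by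
    intro n
    rw [norm_smul]
    have h1 : ‖(((n + 1)! : ℝ))⁻¹‖ ≤ ((n ! : ℝ))⁻¹ := by
      rw [Real.norm_eq_abs, abs_of_nonneg (by positivity)]
      apply inv_anti₀ (by positivity)
      exact_mod_cast Nat.factorial_le (Nat.le_succ n)
    have h2 : ‖x ^ (n + 1)‖ ≤ ‖x‖ ^ (n + 1) := norm_pow_le' x n.succ_pos
    calc ‖(((n + 1)! : ℝ))⁻¹‖ * ‖x ^ (n + 1)‖
        ≤ ((n ! : ℝ))⁻¹ * ‖x‖ ^ (n + 1) :=
          mul_le_mul h1 h2 (norm_nonneg _) (by positivity)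
      _ = ‖x‖ * (‖x‖ ^ n / (n ! : ℝ)) := by rw [pow_succ]; ring
  have hs2 : Summable fun n : ℕ => ‖x‖ * (‖x‖ ^ n / (n ! : ℝ)) :=
    (Real.summable_pow_div_factorial ‖x‖).mul_left _
  rw [h0, add_sub_cancel_left]
  calc ‖∑' n : ℕ, (((n + 1)! : ℝ))⁻¹ • x ^ (n + 1)‖
      ≤ ∑' n : ℕ, ‖(((n + 1)! : ℝ))⁻¹ • x ^ (n + 1)‖ := norm_tsum_le_tsum_norm hsn
    _ ≤ ∑' n : ℕ, ‖x‖ * (‖x‖ ^ n / (n ! : ℝ)) := Summable.tsum_le_tsum hterm hsn hs2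
    _ = ‖x‖ * ∑' n : ℕ, ‖x‖ ^ n / (n ! : ℝ) := tsum_mul_left
    _ = ‖x‖ * Real.exp ‖x‖ := by
        congr 1
        rw [Real.exp_eq_exp_ℝ, NormedSpace.exp_eq_tsum_div]

lemma integrable_pi_prod (μ : Measure ℝ) [IsProbabilityMeasure μ] {g : ℝ → ℝ}
    (hg : Integrable g μ) (n : ℕ) :
    Integrable (fun z : Fin n → ℝ => ∏ i, g (z i)) (Measure.pi fun _ => μ) := by
  induction n with
  | zero =>
    simp only [Finset.univ_eq_empty, Finset.prod_empty]
    exact integrable_const 1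
  | succ n ih =>
    have h := (measurePreserving_piFinSuccAbove (fun _ : Fin (n + 1) => μ) 0).symm
    rw [← h.integrable_comp_emb (MeasurableEquiv.measurableEmbedding _)]
    simp_rw [MeasurableEquiv.piFinSuccAbove_symm_apply, Fin.insertNthEquiv,
      Fin.prod_univ_succ, Fin.insertNth_zero]
    simp only [Fin.zero_succAbove, Function.comp_def, Fin.cons_zero, Fin.cons_succ]
    exact Integrable.mul_prod hg ih

lemma integrable_exp_abs_gaussian (b : ℝ) :
    Integrable (fun x : ℝ => Real.exp (b * |x|)) (gaussianReal 0 1) := by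
  rw [gaussianReal_of_var_ne_zero 0 one_ne_zero]
  rw [integrable_withDensity_iff (measurable_gaussianPDF 0 1)
    (Filter.Eventually.of_forall fun x => ENNReal.ofReal_lt_top)]
  have hmeas : AEStronglyMeasurable
      (fun x : ℝ => Real.exp (b * |x|) * (gaussianPDF 0 1 x).toReal) volume :=
    ((Real.measurable_exp.comp (measurable_abs.const_mul b)).mul
      (ENNReal.measurable_toReal.comp (measurable_gaussianPDF 0 1))).aestronglyMeasurable
  refine Integrable.mono'
    (((integrable_exp_neg_mul_sq (by norm_num : (0:ℝ) < 4⁻¹)).const_mul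
      ((Real.sqrt (2 * Real.pi))⁻¹ * Real.exp (b ^ 2)))) hmeas ?_
  refine Filter.Eventually.of_forall fun x => ?_
  have hpdf : (gaussianPDF 0 1 x).toReal = gaussianPDFReal 0 1 x :=
    ENNReal.toReal_ofReal (gaussianPDFReal_nonneg 0 1 x)
  rw [Real.norm_eq_abs, abs_of_nonneg (by positivity : 0 ≤ Real.exp (b * |x|) * _), hpdf]
  rw [gaussianPDFReal]
  push_cast
  have hsq : Real.sqrt (2 * Real.pi * 1) = Real.sqrt (2 * Real.pi) := by norm_num
  rw [hsq]
  have h1 : Real.exp (b * |x|) * ((Real.sqrt (2 * Real.pi))⁻¹ * Real.exp (-(x - 0) ^ 2 / (2 * 1)))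
      = (Real.sqrt (2 * Real.pi))⁻¹ * Real.exp (b * |x| + -(x - 0) ^ 2 / (2 * 1)) := by
    rw [Real.exp_add]; ring
  rw [h1]
  have h2 : (Real.sqrt (2 * Real.pi))⁻¹ * Real.exp (b ^ 2) * Real.exp (-(4⁻¹) * x ^ 2)
      = (Real.sqrt (2 * Real.pi))⁻¹ * Real.exp (b ^ 2 + -(4⁻¹) * x ^ 2) := by
    rw [Real.exp_add]; ring
  rw [h2]
  have hs : (0:ℝ) ≤ (Real.sqrt (2 * Real.pi))⁻¹ := by positivity
  refine mul_le_mul_of_nonneg_left (Real.exp_le_exp.2 ?_) hs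
  nlinarith [sq_nonneg (2 * b - |x|), sq_abs x]

end SAux

/-- Mean-square smallness of `S⁻¹ − I`: for every `T > 0` there is a constant `K ≥ 0`
such that for all `t ∈ [0, T]` and all `v ∈ ℝᵈ` (Euclidean norm),
`∫ ‖(S(−t; −w) − I)·v‖² dγ_t^{⊗m}(w) ≤ K·t·‖v‖², where `γ_t^{⊗m}` is the `m`-fold
product of the Gaussian measure `N(0, t)` on `ℝ`. -/
theorem S_inv_sub_id_mean_square_small {d m : ℕ} (hd : 0 < d) (hm : 0 < m)
    (A : Matrix (Fin d) (Fin d) ℝ) (B : Fin m → Matrix (Fin d) (Fin d) ℝ) :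
    ∀ T : ℝ, 0 < T → ∃ K : ℝ, 0 ≤ K ∧ ∀ t ∈ Set.Icc (0 : ℝ) T,
      ∀ v : EuclideanSpace ℝ (Fin d),
        ∫ w : Fin m → ℝ,
            ‖Matrix.toEuclideanCLM (𝕜 := ℝ) (S A B (-t) (-w) - 1) v‖ ^ 2
            ∂(Measure.pi fun _ : Fin m => gaussianReal 0 t.toNNReal) ≤
          K * t * ‖v‖ ^ 2 := by
  intro T hT
  classical
  -- continuity of the algebra equivalence
  have hcont : Continuous fun M : Matrix (Fin d) (Fin d) ℝ =>
      Matrix.toEuclideanCLM (𝕜 := ℝ) M := by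
    let φL : Matrix (Fin d) (Fin d) ℝ →ₗ[ℝ]
        (EuclideanSpace ℝ (Fin d) →L[ℝ] EuclideanSpace ℝ (Fin d)) :=
      { toFun := fun M => Matrix.toEuclideanCLM (𝕜 := ℝ) M
        map_add' := fun a b => map_add _ a b
        map_smul' := fun c a => _root_.map_smul _ c a }
    exact φL.continuous_of_finiteDimensional
  have hexp : ∀ M : Matrix (Fin d) (Fin d) ℝ,
      Matrix.toEuclideanCLM (𝕜 := ℝ) (NormedSpace.exp M)
        = NormedSpace.exp (Matrix.toEuclideanCLM (𝕜 := ℝ) M) := by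
    letI : SeminormedRing (Matrix (Fin d) (Fin d) ℝ) := Matrix.linftyOpSemiNormedRing
    letI : NormedRing (Matrix (Fin d) (Fin d) ℝ) := Matrix.linftyOpNormedRing
    letI : NormedAlgebra ℝ (Matrix (Fin d) (Fin d) ℝ) := Matrix.linftyOpNormedAlgebra
    intro M
    exact NormedSpace.map_exp_of_mem_ball (𝕂 := ℝ) (Matrix.toEuclideanCLM (𝕜 := ℝ) (n := Fin d)) hcont M
      ((NormedSpace.expSeries_radius_eq_top ℝ (Matrix (Fin d) (Fin d) ℝ)).symm ▸ edist_lt_top _ _)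
  set C' : EuclideanSpace ℝ (Fin d) →L[ℝ] EuclideanSpace ℝ (Fin d) :=
    Matrix.toEuclideanCLM (𝕜 := ℝ) (A - (1 / 2 : ℝ) • ∑ i, B i ^ 2) with hC'
  set B' : Fin m → (EuclideanSpace ℝ (Fin d) →L[ℝ] EuclideanSpace ℝ (Fin d)) :=
    fun i => Matrix.toEuclideanCLM (𝕜 := ℝ) (B i) with hB'
  set c : ℝ := ‖C'‖ + ∑ i, ‖B' i‖ + 1 with hc
  have hsum0 : (0:ℝ) ≤ ∑ i, ‖B' i‖ := Finset.sum_nonneg fun i _ => norm_nonneg _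
  have hc1 : 1 ≤ c := by
    have := norm_nonneg C'
    simp only [hc]; linarith
  have hc0 : 0 < c := lt_of_lt_of_le one_pos hc1
  have hCc : ‖C'‖ ≤ c := by
    have := norm_nonneg C'
    simp only [hc]; linarith
  have hBc : ∀ i, ‖B' i‖ ≤ c := by
    intro i
    have h1 : ‖B' i‖ ≤ ∑ j, ‖B' j‖ :=
      Finset.single_le_sum (f := fun j => ‖B' j‖) (fun j _ => norm_nonneg _) (Finset.mem_univ i)
    have := norm_nonneg C'
    simp only [hc]; linarith
  set b : ℝ := 2 * c * Real.sqrt T + 1 with hb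
  have hsT : 0 ≤ Real.sqrt T := Real.sqrt_nonneg T
  have hb0 : 0 < b := by positivity
  set g : ℝ → ℝ := fun s => Real.exp (b * |s|) with hg
  set π₁ : Measure (Fin m → ℝ) := Measure.pi fun _ : Fin m => gaussianReal 0 1 with hπ₁
  have hgint : Integrable g (gaussianReal 0 1) := SAux.integrable_exp_abs_gaussian b
  have hprod : Integrable (fun z : Fin m → ℝ => ∏ i, g (z i)) π₁ :=
    SAux.integrable_pi_prod _ hgint m
  set J : ℝ := ∫ z : Fin m → ℝ, ∏ i, g (z i) ∂π₁ with hJ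
  have hJ0 : 0 ≤ J :=
    integral_nonneg fun z => Finset.prod_nonneg fun i _ => (Real.exp_pos _).le
  refine ⟨4 * c ^ 2 * Real.exp (b * Real.sqrt T) * J, by positivity, ?_⟩
  rintro t ⟨ht0, htT⟩ v
  set st : ℝ := Real.sqrt t with hst
  have hst0 : 0 ≤ st := Real.sqrt_nonneg t
  have hst2 : st * st = t := Real.mul_self_sqrt ht0
  have hstT : st ≤ Real.sqrt T := Real.sqrt_le_sqrt htT
  -- measure-preserving scaling
  have h1 : MeasurePreserving (fun x : ℝ => st * x) (gaussianReal 0 1)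
      (gaussianReal 0 t.toNNReal) := by
    refine ⟨measurable_id.const_mul st, ?_⟩
    have hmap := gaussianReal_map_const_mul (μ := 0) (v := 1) st
    have hv : (NNReal.mk (st ^ 2) (sq_nonneg st) * 1 : NNReal) = t.toNNReal := by
      rw [mul_one]
      ext
      simp [Real.coe_toNNReal t ht0, sq, hst2]
    rw [show (fun x : ℝ => st * x) = (st * ·) from rfl, hmap, mul_zero, hv]
  have hmapm : MeasurePreserving (fun z : Fin m → ℝ => fun i => st * z i) π₁
      (Measure.pi fun _ : Fin m => gaussianReal 0 t.toNNReal) :=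
    measurePreserving_pi _ _ fun _ => h1
  -- rewrite the integrand
  have hrw : ∀ w : Fin m → ℝ,
      Matrix.toEuclideanCLM (𝕜 := ℝ) (S A B (-t) (-w) - 1)
        = NormedSpace.exp ((-t) • C' + ∑ i, (-(w i)) • B' i) - 1 := by
    intro w
    have harg : Matrix.toEuclideanCLM (𝕜 := ℝ)
        ((-t) • (A - (1 / 2 : ℝ) • ∑ i, B i ^ 2) + ∑ i, (-w) i • B i)
        = (-t) • C' + ∑ i, (-(w i)) • B' i := by
      rw [map_add]
      congr 1
      · exact _root_.map_smul (Matrix.toEuclideanCLM (𝕜 := ℝ) (n := Fin d)) (-t) _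
      · rw [map_sum]
        refine Finset.sum_congr rfl fun i _ => ?_
        rw [_root_.map_smul (Matrix.toEuclideanCLM (𝕜 := ℝ) (n := Fin d)) ((-w) i) (B i),
          Pi.neg_apply]
    rw [S, map_sub, map_one, hexp, harg]
  simp only [hrw]
  -- the integrand is continuous
  have hXc : Continuous fun w : Fin m → ℝ => (-t) • C' + ∑ i, (-(w i)) • B' i :=
    continuous_const.add (continuous_finset_sum _ fun i _ =>
      ((continuous_apply i).neg).smul continuous_const)
  have hFc : Continuous fun w : Fin m → ℝ =>
      ‖(NormedSpace.exp ((-t) • C' + ∑ i, (-(w i)) • B' i) - 1) v‖ ^ 2 :=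
    ((((((continuous_iff_continuousAt.2 fun x =>
      (NormedSpace.exp_analytic (𝕂 := ℝ) x).continuousAt)).comp hXc).sub continuous_const).clm_apply
      continuous_const).norm.pow 2)
  -- change variables
  rw [← hmapm.map_eq, integral_map hmapm.measurable.aemeasurable hFc.aestronglyMeasurable]
  -- pointwise bound
  have hpt : ∀ z : Fin m → ℝ,
      ‖(NormedSpace.exp ((-t) • C' + ∑ i, (-(st * z i)) • B' i) - 1) v‖ ^ 2
        ≤ (4 * c ^ 2 * Real.exp (b * Real.sqrt T) * t * ‖v‖ ^ 2) * ∏ i, g (z i) := by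
    intro z
    set X : EuclideanSpace ℝ (Fin d) →L[ℝ] EuclideanSpace ℝ (Fin d) :=
      (-t) • C' + ∑ i, (-(st * z i)) • B' i with hX
    set u : ℝ := ∑ i, |z i| with hu
    have hu0 : 0 ≤ u := Finset.sum_nonneg fun i _ => abs_nonneg _
    set y : ℝ := Real.sqrt T + u with hy
    have hy0 : 0 ≤ y := by positivity
    set r : ℝ := ‖X‖ with hr
    have hr0 : 0 ≤ r := norm_nonneg _
    have hra : r ≤ c * st * y := by
      have h2 : r ≤ ‖(-t) • C'‖ + ‖∑ i, (-(st * z i)) • B' i‖ := norm_add_le _ _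
      have h3 : ‖(-t) • C'‖ = t * ‖C'‖ := by
        have h := norm_smul (-t) C'
        rw [Real.norm_eq_abs, abs_neg, abs_of_nonneg ht0] at h
        exact h
      have h4 : ‖∑ i, (-(st * z i)) • B' i‖ ≤ u * (st * c) := by
        refine le_trans (norm_sum_le _ _) ?_
        rw [hu, Finset.sum_mul]
        refine Finset.sum_le_sum fun i _ => ?_
        have h := norm_smul (-(st * z i)) (B' i)
        rw [Real.norm_eq_abs, abs_neg, abs_mul, abs_of_nonneg hst0] at h
        rw [h]
        calc st * |z i| * ‖B' i‖ ≤ st * |z i| * c :=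
              mul_le_mul_of_nonneg_left (hBc i) (by positivity)
          _ = |z i| * (st * c) := by ring
      have h5 : t * ‖C'‖ ≤ t * c := mul_le_mul_of_nonneg_left hCc ht0
      have h6a : t ≤ st * Real.sqrt T := by
        have := mul_le_mul_of_nonneg_left hstT hst0
        linarith [hst2]
      have h6 : t * c ≤ st * Real.sqrt T * c := mul_le_mul_of_nonneg_right h6a hc0.le
      have hyy : c * st * y = st * Real.sqrt T * c + u * (st * c) := by rw [hy]; ring
      rw [h3] at h2
      linarith
    have hrb : r ≤ c * Real.sqrt T * y :=
      le_trans hra (mul_le_mul_of_nonneg_right (mul_le_mul_of_nonneg_left hstT hc0.le) hy0)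
    have h7 : ‖(NormedSpace.exp X - 1) v‖ ≤ (r * Real.exp r) * ‖v‖ := by
      calc ‖(NormedSpace.exp X - 1) v‖ ≤ ‖NormedSpace.exp X - 1‖ * ‖v‖ :=
            ContinuousLinearMap.le_opNorm _ _
        _ ≤ (r * Real.exp r) * ‖v‖ :=
            mul_le_mul_of_nonneg_right (SAux.norm_exp_sub_one_le X) (norm_nonneg v)
    have h8 : ‖(NormedSpace.exp X - 1) v‖ ^ 2 ≤ ((r * Real.exp r) * ‖v‖) ^ 2 :=
      pow_le_pow_left₀ (norm_nonneg _) h7 2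
    have key : (r * Real.exp r) ^ 2 ≤ 4 * c ^ 2 * Real.exp (b * Real.sqrt T) * t * ∏ i, g (z i) := by
      have hsq : r ^ 2 ≤ c ^ 2 * t * y ^ 2 := by
        have h9 : r * r ≤ (c * st * y) * (c * st * y) := mul_self_le_mul_self hr0 hra
        have h10 : (c * st * y) * (c * st * y) = c ^ 2 * t * y ^ 2 := by rw [← hst2]; ring
        calc r ^ 2 = r * r := pow_two r
          _ ≤ (c * st * y) * (c * st * y) := h9
          _ = c ^ 2 * t * y ^ 2 := h10
      have hexpr : Real.exp r ≤ Real.exp (c * Real.sqrt T * y) := Real.exp_le_exp.2 hrb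
      have hy4 : y ^ 2 ≤ 4 * Real.exp y := SAux.sq_le_four_mul_exp hy0
      have hcomb : Real.exp y * Real.exp (c * Real.sqrt T * y) ^ 2 = Real.exp (b * y) := by
        rw [sq, ← Real.exp_add, ← Real.exp_add, hb]
        congr 1
        ring
      have hby : Real.exp (b * y) = Real.exp (b * Real.sqrt T) * ∏ i, g (z i) := by
        rw [hy, mul_add, Real.exp_add]
        congr 1
        rw [hu, Finset.mul_sum, Real.exp_sum]
      have hE0 : 0 ≤ Real.exp (c * Real.sqrt T * y) := (Real.exp_pos _).le
      have hE1 : Real.exp r ^ 2 ≤ Real.exp (c * Real.sqrt T * y) ^ 2 :=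
        pow_le_pow_left₀ (Real.exp_pos _).le hexpr 2
      calc (r * Real.exp r) ^ 2 = r ^ 2 * Real.exp r ^ 2 := by ring
        _ ≤ (c ^ 2 * t * y ^ 2) * Real.exp (c * Real.sqrt T * y) ^ 2 :=
            mul_le_mul hsq hE1 (by positivity)
              (mul_nonneg (mul_nonneg (sq_nonneg c) ht0) (sq_nonneg y))
        _ ≤ (c ^ 2 * t * (4 * Real.exp y)) * Real.exp (c * Real.sqrt T * y) ^ 2 :=
            mul_le_mul_of_nonneg_right
              (mul_le_mul_of_nonneg_left hy4 (mul_nonneg (sq_nonneg c) ht0)) (sq_nonneg _)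
        _ = 4 * c ^ 2 * t * (Real.exp y * Real.exp (c * Real.sqrt T * y) ^ 2) := by ring
        _ = 4 * c ^ 2 * t * Real.exp (b * y) := by rw [hcomb]
        _ = 4 * c ^ 2 * Real.exp (b * Real.sqrt T) * t * ∏ i, g (z i) := by
            rw [hby]; ring
    calc ‖(NormedSpace.exp X - 1) v‖ ^ 2 ≤ ((r * Real.exp r) * ‖v‖) ^ 2 := h8
      _ = (r * Real.exp r) ^ 2 * ‖v‖ ^ 2 := by ring
      _ ≤ (4 * c ^ 2 * Real.exp (b * Real.sqrt T) * t * ∏ i, g (z i)) * ‖v‖ ^ 2 :=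
          mul_le_mul_of_nonneg_right key (by positivity)
      _ = (4 * c ^ 2 * Real.exp (b * Real.sqrt T) * t * ‖v‖ ^ 2) * ∏ i, g (z i) := by ring
  -- integrate the bound
  have hDint : Integrable
      (fun z : Fin m → ℝ => (4 * c ^ 2 * Real.exp (b * Real.sqrt T) * t * ‖v‖ ^ 2) * ∏ i, g (z i))
      π₁ := hprod.const_mul _
  have hmono := integral_mono_of_nonneg
    (f := fun z : Fin m → ℝ =>
      ‖(NormedSpace.exp ((-t) • C' + ∑ i, (-(st * z i)) • B' i) - 1) v‖ ^ 2)
    (g := fun z : Fin m → ℝ =>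
      (4 * c ^ 2 * Real.exp (b * Real.sqrt T) * t * ‖v‖ ^ 2) * ∏ i, g (z i))
    (μ := π₁)
    (Filter.Eventually.of_forall fun z => by positivity)
    hDint
    (Filter.Eventually.of_forall hpt)
  refine le_trans (le_of_eq ?_) (le_trans hmono ?_)
  · rfl
  · rw [integral_const_mul]
    rw [← hJ]
    apply le_of_eq
    ring
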